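/- Let k, ℓ ≥ 1 be integers, r_1, …, r_ℓ > 0, and let G be a P5-free graph with nonempty disjoint sets A_1, …, A_ℓ, B_1, …, B_k ⊆ V(G) such that: B_1, …, B_k are pairwise anticomplete and each G[B_i] is anticonnected; no vertex of A_1 ∪ ⋯ ∪ A_ℓ is mixed on two of the B_i; and χ(A_j \ N_G(v)) ≤ r_j for all j ∈ [ℓ] and all v ∈ B_1 ∪ ⋯ ∪ B_k. Then either (a) there exist i ∈ [k] and I ⊆ [ℓ] with |I| ≥ (1 − k^{−1/2})·ℓ such that for all j ∈ I there exists A_j' ⊆ A_j complete to B_i with χ(A_j') ≥ (1 − 1/k)·χ(A_j) − k·r_j, or (b) some G[A_j] contains a complete blockade (D_1, …, D_q) with q ≥ k^{1/2} and χ(D_i) ≥ χ(A_j)/k for all i ∈ [q]. -/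

import Mathlib

open SimpleGraph

/-- The chromatic number of the subgraph of `G` induced on `S`, as a natural number. -/
noncomputable def chiS {V : Type*} [Fintype V] (G : SimpleGraph V) (S : Set V) : ℕ :=
  (G.induce S).chromaticNumber.toNat

/-- A graph is `P5`-free if it has no induced subgraph isomorphic to the five-vertex path. -/
def P5Free {V : Type*} (G : SimpleGraph V) : Prop :=
  IsEmpty (SimpleGraph.pathGraph 5 ↪g G)

/-- `v` is mixed on `S`: it has both a neighbour and a nonneighbour in `S`. -/
def MixedOn {V : Type*} (G : SimpleGraph V) (v : V) (S : Set V) : Prop :=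
  (∃ s ∈ S, G.Adj v s) ∧ (∃ s ∈ S, ¬ G.Adj v s)

section Aux

variable {V : Type*} [Fintype V] {G : SimpleGraph V}

lemma chiS_le_of_colorable {S : Set V} {n : ℕ} (h : (G.induce S).Colorable n) :
    chiS G S ≤ n := by
  have h1 := h.chromaticNumber_le
  have h2 := ENat.toNat_le_toNat h1 (by simp)
  simpa [chiS] using h2

lemma colorable_chiS (S : Set V) : (G.induce S).Colorable (chiS G S) :=
  colorable_chromaticNumber_of_fintype _

lemma chiS_mono {S T : Set V} (h : S ⊆ T) : chiS G S ≤ chiS G T :=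
  chiS_le_of_colorable (Colorable.of_hom (G.induceHomOfLE h).toHom (colorable_chiS T))

lemma colorable_union {S T : Set V} {m n : ℕ} (hS : (G.induce S).Colorable m)
    (hT : (G.induce T).Colorable n) : (G.induce (S ∪ T)).Colorable (m + n) := by
  classical
  obtain ⟨f⟩ := hS
  obtain ⟨g⟩ := hT
  refine ⟨Coloring.mk (fun x => if hx : (x : V) ∈ S then
      ⟨(f ⟨x, hx⟩).val, lt_of_lt_of_le (f ⟨x, hx⟩).isLt (Nat.le_add_right m n)⟩ else
      ⟨m + (g ⟨x, x.2.resolve_left hx⟩).val, by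
        have := (g ⟨x, x.2.resolve_left hx⟩).isLt; omega⟩) ?_⟩
  rintro ⟨x, hx⟩ ⟨y, hy⟩ hadj heq
  have hxy : G.Adj x y := hadj
  by_cases h1 : x ∈ S <;> by_cases h2 : y ∈ S <;>
    simp only [h1, h2, dif_pos, dif_neg, not_false_iff, Fin.mk.injEq] at heq
  · exact f.valid (show (G.induce S).Adj ⟨x, h1⟩ ⟨y, h2⟩ from hxy) (Fin.ext heq)
  · have := (f ⟨x, h1⟩).isLt; omega
  · have := (f ⟨y, h2⟩).isLt; omega
  · exact g.valid (show (G.induce T).Adj ⟨x, hx.resolve_left h1⟩ ⟨y, hy.resolve_left h2⟩ from hxy)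
      (Fin.ext (by omega))

lemma chiS_union_le (S T : Set V) : chiS G (S ∪ T) ≤ chiS G S + chiS G T :=
  chiS_le_of_colorable (colorable_union (colorable_chiS S) (colorable_chiS T))

lemma chiS_empty : chiS G (∅ : Set V) = 0 := by
  have : (G.induce (∅ : Set V)).chromaticNumber = 0 :=
    chromaticNumber_eq_zero_of_isEmpty
  simp [chiS, this]

lemma chiS_biUnion_le {ι : Type*} [DecidableEq ι] (s : Finset ι) (f : ι → Set V) :
    chiS G (⋃ i ∈ s, f i) ≤ ∑ i ∈ s, chiS G (f i) := by
  induction s using Finset.induction with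
  | empty => simp [chiS_empty]
  | @insert a s ha ih =>
      rw [Finset.set_biUnion_insert, Finset.sum_insert ha]
      exact le_trans (chiS_union_le _ _) (Nat.add_le_add_left ih _)

lemma crossing_walk {α : Type*} {H : SimpleGraph α} (P : α → Prop) :
    ∀ {u y : α}, H.Walk u y → P u → ¬ P y → ∃ a b, H.Adj a b ∧ P a ∧ ¬ P b := by
  intro u y w
  induction w with
  | nil => intro hu hy; exact absurd hu hy
  | @cons a b c h p ih =>
      intro hu hy
      by_cases hv : P b
      · exact ih hv hy
      · exact ⟨a, b, h, hu, hv⟩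

lemma exists_crossing_adj {α : Type*} {H : SimpleGraph α} (hc : H.Connected)
    (P : α → Prop) {x y : α} (hx : P x) (hy : ¬ P y) :
    ∃ a b, H.Adj a b ∧ P a ∧ ¬ P b := by
  obtain ⟨w⟩ := hc.preconnected x y
  exact crossing_walk P w hx hy

end Aux

theorem stmt_10 {V : Type*} [Fintype V] (G : SimpleGraph V) (hP5 : P5Free G)
    (k ℓ : ℕ) (hk : 1 ≤ k) (hℓ : 1 ≤ ℓ)
    (rf : Fin ℓ → ℝ) (hrf : ∀ j, 0 < rf j)
    (Af : Fin ℓ → Set V) (Bf : Fin k → Set V)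
    (hAne : ∀ j, (Af j).Nonempty) (hBne : ∀ i, (Bf i).Nonempty)
    (hdAA : ∀ j j', j ≠ j' → Disjoint (Af j) (Af j'))
    (hdAB : ∀ j i, Disjoint (Af j) (Bf i))
    (hdBB : ∀ i i', i ≠ i' → Disjoint (Bf i) (Bf i'))
    (hanti : ∀ i i', i ≠ i' → ∀ a ∈ Bf i, ∀ b ∈ Bf i', ¬ G.Adj a b)
    (hanticonn : ∀ i, ((G.induce (Bf i))ᶜ).Connected)
    (hmix : ∀ j : Fin ℓ, ∀ a ∈ Af j, ∀ i i', i ≠ i' →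
      ¬ (MixedOn G a (Bf i) ∧ MixedOn G a (Bf i')))
    (hcov : ∀ j : Fin ℓ, ∀ i : Fin k, ∀ v ∈ Bf i,
      (chiS G (Af j \ G.neighborSet v) : ℝ) ≤ rf j) :
    (∃ i : Fin k, ∃ I : Finset (Fin ℓ),
      (1 - 1 / Real.sqrt k) * (ℓ : ℝ) ≤ (I.card : ℝ) ∧
      ∀ j ∈ I, ∃ A' ⊆ Af j, (∀ a ∈ A', ∀ b ∈ Bf i, G.Adj a b) ∧
        (1 - 1 / (k : ℝ)) * (chiS G (Af j) : ℝ) - k * rf j ≤ (chiS G A' : ℝ)) ∨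
    (∃ j : Fin ℓ, ∃ (q : ℕ) (D : Fin q → Set V), Real.sqrt k ≤ (q : ℝ) ∧
      (∀ i, D i ⊆ Af j) ∧
      (∀ i i', i ≠ i' → Disjoint (D i) (D i')) ∧
      (∀ i i', i ≠ i' → ∀ a ∈ D i, ∀ b ∈ D i', G.Adj a b) ∧
      ∀ i, (chiS G (Af j) : ℝ) / k ≤ (chiS G (D i) : ℝ)) := by
  classical
  have hk0 : (0:ℝ) < (k:ℝ) := by exact_mod_cast Nat.lt_of_lt_of_le Nat.zero_lt_one hk
  have hsk : (0:ℝ) < Real.sqrt k := Real.sqrt_pos.2 hk0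
  have hsq : Real.sqrt k * Real.sqrt k = (k:ℝ) := Real.mul_self_sqrt (le_of_lt hk0)
  set M : Fin ℓ → Fin k → Set V := fun j i =>
    {a | a ∈ Af j ∧ MixedOn G a (Bf i) ∧ ∀ i', i' ≠ i → ∀ b ∈ Bf i', G.Adj a b} with hMdef
  set F : Fin ℓ → Fin k → Set V := fun j i =>
    {a | a ∈ Af j ∧ ∀ b ∈ Bf i, G.Adj a b} with hFdef
  set Z : Fin ℓ → Fin k → Set V := fun j i =>
    {a | a ∈ Af j ∧ ∀ b ∈ Bf i, ¬ G.Adj a b} with hZdef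
  -- the covered (anticomplete) sets have small chromatic number
  have hZ : ∀ j i, (chiS G (Z j i) : ℝ) ≤ rf j := by
    intro j i
    obtain ⟨v0, hv0⟩ := hBne i
    refine le_trans ?_ (hcov j i v0 hv0)
    have hsub : Z j i ⊆ Af j \ G.neighborSet v0 := by
      intro a ha
      exact ⟨ha.1, fun hmem => ha.2 v0 hv0 (G.adj_symm hmem)⟩
    exact_mod_cast chiS_mono hsub
  -- covering A_j
  have hcover : ∀ j i, Af j ⊆ F j i ∪ M j i ∪ ⋃ i', Z j i' := by
    intro j i a ha
    by_cases hz : ∃ i', ∀ b ∈ Bf i', ¬ G.Adj a b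
    · obtain ⟨i', hi'⟩ := hz
      exact Set.mem_union_right _ (Set.mem_iUnion.2 ⟨i', ⟨ha, hi'⟩⟩)
    · push_neg at hz
      by_cases hcomp : ∀ b ∈ Bf i, G.Adj a b
      · exact Set.mem_union_left _ (Set.mem_union_left _ ⟨ha, hcomp⟩)
      · push_neg at hcomp
        refine Set.mem_union_left _ (Set.mem_union_right _ ⟨ha, ⟨hz i, hcomp⟩, ?_⟩)
        intro i'' hne b hb
        by_contra hnadj
        exact hmix j a ha i'' i hne ⟨⟨hz i'', ⟨b, hb, hnadj⟩⟩, ⟨hz i, hcomp⟩⟩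
  -- the key chromatic inequality
  have hkey : ∀ j i, (chiS G (Af j) : ℝ) ≤
      (chiS G (F j i) : ℝ) + (chiS G (M j i) : ℝ) + k * rf j := by
    intro j i
    have hU : (⋃ i', Z j i') = ⋃ i' ∈ (Finset.univ : Finset (Fin k)), Z j i' := by
      ext x; simp
    have h1 : chiS G (Af j) ≤ chiS G (F j i) + chiS G (M j i)
        + ∑ i' : Fin k, chiS G (Z j i') := by
      calc chiS G (Af j) ≤ chiS G (F j i ∪ M j i ∪ ⋃ i', Z j i') := chiS_mono (hcover j i)
        _ ≤ chiS G (F j i ∪ M j i) + chiS G (⋃ i', Z j i') := chiS_union_le _ _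
        _ ≤ chiS G (F j i) + chiS G (M j i) + chiS G (⋃ i', Z j i') := by
            have := chiS_union_le (G := G) (F j i) (M j i); omega
        _ ≤ chiS G (F j i) + chiS G (M j i) + ∑ i' : Fin k, chiS G (Z j i') := by
            have h2 := chiS_biUnion_le (G := G) (Finset.univ : Finset (Fin k)) (Z j)
            rw [hU]; omega
    have h2 : (∑ i' : Fin k, (chiS G (Z j i') : ℝ)) ≤ k * rf j := by
      calc (∑ i' : Fin k, (chiS G (Z j i') : ℝ)) ≤ ∑ _i' : Fin k, rf j :=
            Finset.sum_le_sum (fun i' _ => hZ j i')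
        _ = k * rf j := by
            rw [Finset.sum_const, Finset.card_univ, Fintype.card_fin, nsmul_eq_mul]
    have h1' : (chiS G (Af j) : ℝ) ≤ (chiS G (F j i) : ℝ) + (chiS G (M j i) : ℝ)
        + ∑ i' : Fin k, (chiS G (Z j i') : ℝ) := by exact_mod_cast h1
    linarith
  -- disjointness of the mixed sets
  have hMdisj : ∀ j, ∀ i i' : Fin k, i ≠ i' → Disjoint (M j i) (M j i') := by
    intro j i i' hne
    rw [Set.disjoint_left]
    intro a ha ha'
    exact hmix j a ha.1 i i' hne ⟨ha.2.1, ha'.2.1⟩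
  -- KEY P5 claim: the mixed sets are pairwise complete to each other
  have hMM : ∀ j, ∀ i i' : Fin k, i ≠ i' → ∀ a ∈ M j i, ∀ a2 ∈ M j i', G.Adj a a2 := by
    intro j i i' hii a ha a2 ha2
    by_contra hna
    obtain ⟨haA, hamix, hacomp⟩ := ha
    obtain ⟨ha2A, ha2mix, ha2comp⟩ := ha2
    have hane : a ≠ a2 := by
      intro h; subst h
      exact hmix j a haA i i' hii ⟨hamix, ha2mix⟩
    obtain ⟨⟨n0, hn0B, hn0adj⟩, ⟨s0, hs0B, hs0adj⟩⟩ := hamix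
    obtain ⟨c0, hc0B, hc0n⟩ := ha2mix.2
    obtain ⟨bb, bh, hHadj, hPb, hPnb⟩ :=
      exists_crossing_adj (hanticonn i) (fun x : (Bf i) => G.Adj a (x : V))
        (x := ⟨n0, hn0B⟩) (y := ⟨s0, hs0B⟩) hn0adj hs0adj
    have hbB : (bb : V) ∈ Bf i := bb.2
    have hbhB : (bh : V) ∈ Bf i := bh.2
    rw [compl_adj] at hHadj
    have hbnadj' : ¬ G.Adj (bb : V) (bh : V) := hHadj.2
    have hbne' : (bb : V) ≠ (bh : V) := fun h => hHadj.1 (Subtype.ext h)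
    have e01 : G.Adj (bh : V) a2 := (ha2comp i hii (bh : V) hbhB).symm
    have e12 : G.Adj a2 (bb : V) := ha2comp i hii (bb : V) hbB
    have e23 : G.Adj (bb : V) a := hPb.symm
    have e34 : G.Adj a c0 := hacomp i' (Ne.symm hii) c0 hc0B
    have n02 : ¬ G.Adj (bh : V) (bb : V) := fun h => hbnadj' h.symm
    have n03 : ¬ G.Adj (bh : V) a := fun h => hPnb h.symm
    have n04 : ¬ G.Adj (bh : V) c0 := hanti i i' hii _ hbhB _ hc0B
    have n13 : ¬ G.Adj a2 a := fun h => hna h.symm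
    have n14 : ¬ G.Adj a2 c0 := hc0n
    have n24 : ¬ G.Adj (bb : V) c0 := hanti i i' hii _ hbB _ hc0B
    have dAB : ∀ x ∈ Af j, ∀ i0 : Fin k, ∀ y ∈ Bf i0, x ≠ y := fun x hx i0 y hy h =>
      Set.disjoint_left.1 (hdAB j i0) hx (h ▸ hy)
    have dBB : ∀ y ∈ Bf i, ∀ z ∈ Bf i', y ≠ z := fun y hy z hz h =>
      Set.disjoint_left.1 (hdBB i i' hii) hy (h ▸ hz)
    have d01 : (bh : V) ≠ a2 := fun h => dAB a2 ha2A i (bh : V) hbhB h.symm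
    have d02 : (bh : V) ≠ (bb : V) := fun h => hbne' h.symm
    have d03 : (bh : V) ≠ a := fun h => dAB a haA i _ hbhB h.symm
    have d04 : (bh : V) ≠ c0 := dBB _ hbhB _ hc0B
    have d12 : a2 ≠ (bb : V) := dAB a2 ha2A i _ hbB
    have d13 : a2 ≠ a := Ne.symm hane
    have d14 : a2 ≠ c0 := dAB a2 ha2A i' _ hc0B
    have d23 : (bb : V) ≠ a := fun h => dAB a haA i _ hbB h.symm
    have d24 : (bb : V) ≠ c0 := dBB _ hbB _ hc0B
    have d34 : a ≠ c0 := dAB a haA i' _ hc0B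
    set v : Fin 5 → V := ![(bh : V), a2, (bb : V), a, c0] with hv
    have h0 : ∀ (p : 0 < 5), v ⟨0, p⟩ = (bh : V) := fun _ => rfl
    have h1 : ∀ (p : 1 < 5), v ⟨1, p⟩ = a2 := fun _ => rfl
    have h2 : ∀ (p : 2 < 5), v ⟨2, p⟩ = (bb : V) := fun _ => rfl
    have h3 : ∀ (p : 3 < 5), v ⟨3, p⟩ = a := fun _ => rfl
    have h4 : ∀ (p : 4 < 5), v ⟨4, p⟩ = c0 := fun _ => rfl
    have hinj : Function.Injective v := by
      intro s t h
      fin_cases s <;> fin_cases t <;>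
        simp only [h0, h1, h2, h3, h4] at h <;>
        first
          | rfl
          | exact absurd h d01 | exact absurd h.symm d01
          | exact absurd h d02 | exact absurd h.symm d02
          | exact absurd h d03 | exact absurd h.symm d03
          | exact absurd h d04 | exact absurd h.symm d04
          | exact absurd h d12 | exact absurd h.symm d12
          | exact absurd h d13 | exact absurd h.symm d13
          | exact absurd h d14 | exact absurd h.symm d14
          | exact absurd h d23 | exact absurd h.symm d23
          | exact absurd h d24 | exact absurd h.symm d24
          | exact absurd h d34 | exact absurd h.symm d34
    have hirr : ∀ x : V, ¬ G.Adj x x := fun x => G.loopless.irrefl x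
    refine (show IsEmpty (SimpleGraph.pathGraph 5 ↪g G) from hP5).false
      ⟨⟨v, hinj⟩, @fun s t => ?_⟩
    fin_cases s <;> fin_cases t <;>
      simp only [h0, h1, h2, h3, h4] <;>
      first
        | exact iff_of_false (hirr _) (by rw [pathGraph_adj]; decide)
        | exact iff_of_true e01 (by rw [pathGraph_adj]; decide)
        | exact iff_of_true e01.symm (by rw [pathGraph_adj]; decide)
        | exact iff_of_true e12 (by rw [pathGraph_adj]; decide)
        | exact iff_of_true e12.symm (by rw [pathGraph_adj]; decide)
        | exact iff_of_true e23 (by rw [pathGraph_adj]; decide)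
        | exact iff_of_true e23.symm (by rw [pathGraph_adj]; decide)
        | exact iff_of_true e34 (by rw [pathGraph_adj]; decide)
        | exact iff_of_true e34.symm (by rw [pathGraph_adj]; decide)
        | exact iff_of_false n02 (by rw [pathGraph_adj]; decide)
        | exact iff_of_false (fun h => n02 h.symm) (by rw [pathGraph_adj]; decide)
        | exact iff_of_false n03 (by rw [pathGraph_adj]; decide)
        | exact iff_of_false (fun h => n03 h.symm) (by rw [pathGraph_adj]; decide)
        | exact iff_of_false n04 (by rw [pathGraph_adj]; decide)
        | exact iff_of_false (fun h => n04 h.symm) (by rw [pathGraph_adj]; decide)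
        | exact iff_of_false n13 (by rw [pathGraph_adj]; decide)
        | exact iff_of_false (fun h => n13 h.symm) (by rw [pathGraph_adj]; decide)
        | exact iff_of_false n14 (by rw [pathGraph_adj]; decide)
        | exact iff_of_false (fun h => n14 h.symm) (by rw [pathGraph_adj]; decide)
        | exact iff_of_false n24 (by rw [pathGraph_adj]; decide)
        | exact iff_of_false (fun h => n24 h.symm) (by rw [pathGraph_adj]; decide)
  -- bad indices
  set bad : Fin ℓ → Finset (Fin k) := fun j =>
    Finset.univ.filter (fun i => (chiS G (Af j) : ℝ) / k < (chiS G (M j i) : ℝ)) with hbaddef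
  by_cases hbig : ∃ j, Real.sqrt k ≤ ((bad j).card : ℝ)
  · right
    obtain ⟨j, hj⟩ := hbig
    set e := (bad j).equivFin.symm with he
    refine ⟨j, (bad j).card, fun t => M j ((e t : Fin k)), hj,
      fun t a ha => ha.1, ?_, ?_, ?_⟩
    · intro t t' hne
      exact hMdisj j _ _ (fun h => hne (e.injective (Subtype.ext h)))
    · intro t t' hne a ha b hb
      exact hMM j _ _ (fun h => hne (e.injective (Subtype.ext h))) a ha b hb
    · intro t
      have hmem : ((e t) : Fin k) ∈ bad j := (e t).2
      exact le_of_lt (Finset.mem_filter.1 hmem).2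
  · left
    push_neg at hbig
    haveI : Nonempty (Fin k) := ⟨⟨0, hk⟩⟩
    haveI : Nonempty (Fin ℓ) := ⟨⟨0, hℓ⟩⟩
    set cnt : Fin k → ℕ := fun i => (Finset.univ.filter (fun j => i ∈ bad j)).card with hcntdef
    have hb2 : ∀ j, (bad j).card = ∑ i : Fin k, (if i ∈ bad j then 1 else 0) := by
      intro j
      rw [← Finset.card_filter]
      congr 1
      ext x; simp
    have hdouble : ∑ i : Fin k, cnt i = ∑ j : Fin ℓ, (bad j).card := by
      simp only [hcntdef, Finset.card_filter]
      rw [Finset.sum_comm]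
      simp only [← Finset.card_filter]
      congr 1
      ext j
      rw [hb2 j, Finset.card_filter]
    have hex : ∃ i : Fin k, (cnt i : ℝ) ≤ (ℓ : ℝ) / Real.sqrt k := by
      by_contra hno
      push_neg at hno
      have h1 : ((ℓ : ℝ) / Real.sqrt k) * k < ∑ i : Fin k, (cnt i : ℝ) := by
        calc ((ℓ:ℝ)/Real.sqrt k) * k = ∑ _i : Fin k, ((ℓ:ℝ)/Real.sqrt k) := by
              rw [Finset.sum_const, Finset.card_univ, Fintype.card_fin, nsmul_eq_mul]; ring
          _ < ∑ i : Fin k, (cnt i : ℝ) :=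
              Finset.sum_lt_sum_of_nonempty Finset.univ_nonempty (fun i _ => hno i)
      have h2 : (∑ j : Fin ℓ, ((bad j).card : ℝ)) < (ℓ:ℝ) * Real.sqrt k := by
        calc (∑ j : Fin ℓ, ((bad j).card : ℝ)) < ∑ _j : Fin ℓ, Real.sqrt k :=
              Finset.sum_lt_sum_of_nonempty Finset.univ_nonempty (fun j _ => hbig j)
          _ = ℓ * Real.sqrt k := by
              rw [Finset.sum_const, Finset.card_univ, Fintype.card_fin, nsmul_eq_mul]
      have h3 : ((ℓ:ℝ)/Real.sqrt k) * k = (ℓ:ℝ) * Real.sqrt k := by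
        have hne : Real.sqrt k ≠ 0 := ne_of_gt hsk
        calc ((ℓ:ℝ)/Real.sqrt k) * k
            = ((ℓ:ℝ)/Real.sqrt k) * (Real.sqrt k * Real.sqrt k) := by rw [hsq]
          _ = (ℓ:ℝ) * Real.sqrt k := by
              rw [div_mul_eq_mul_div, mul_comm (Real.sqrt (k:ℕ)) (Real.sqrt (k:ℕ))]
              rw [← mul_assoc, mul_div_assoc, div_self hne, mul_one]
      have h4 : (∑ i : Fin k, (cnt i : ℝ)) = ∑ j : Fin ℓ, ((bad j).card : ℝ) := by
        exact_mod_cast hdouble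
      linarith
    obtain ⟨i, hi⟩ := hex
    refine ⟨i, Finset.univ.filter (fun j => i ∉ bad j), ?_, ?_⟩
    · have hc : cnt i + (Finset.univ.filter (fun j => i ∉ bad j)).card = ℓ := by
        have h := Finset.card_filter_add_card_filter_not
          (s := (Finset.univ : Finset (Fin ℓ))) (p := fun j => i ∈ bad j)
        simpa using h
      have hcle : cnt i ≤ ℓ := by omega
      have hℓs : ((Finset.univ.filter (fun j => i ∉ bad j)).card : ℝ)
          = (ℓ : ℝ) - cnt i := by
        have : ((cnt i : ℝ)) + ((Finset.univ.filter (fun j => i ∉ bad j)).card : ℝ)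
            = (ℓ : ℝ) := by exact_mod_cast hc
        linarith
      rw [hℓs]
      have hexp : (1 - 1/Real.sqrt k) * (ℓ:ℝ) = (ℓ:ℝ) - (ℓ:ℝ)/Real.sqrt k := by ring
      linarith
    · intro j hj
      have hjnb : i ∉ bad j := (Finset.mem_filter.1 hj).2
      have hm : (chiS G (M j i) : ℝ) ≤ (chiS G (Af j) : ℝ) / k := by
        by_contra h
        push_neg at h
        exact hjnb (Finset.mem_filter.2 ⟨Finset.mem_univ _, h⟩)
      refine ⟨F j i, fun a ha => ha.1, fun a ha => ha.2, ?_⟩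
      have hkey' := hkey j i
      have hid : (1 - 1/(k:ℝ)) * (chiS G (Af j) : ℝ)
          = (chiS G (Af j) : ℝ) - (chiS G (Af j) : ℝ)/k := by
        field_simp
      linarith
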